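/- For a 132-avoiding permutation w ∈ S_n, the inversion set Inv_i(w) = {j : i < j ≤ n and w_i > w_j} equals {k : w_k < min{w_1,…,w_i}} for every i. -/

import Mathlib

/-- `w` is 132-avoiding: no indices `i < j < k` with `w i < w k < w j`. -/
def Avoids132 {n : ℕ} (w : Equiv.Perm (Fin n)) : Prop :=
  ¬ ∃ i j k : Fin n, i < j ∧ j < k ∧ w i < w k ∧ w k < w j

/-- For a 132-avoiding permutation, the inversion set
`Inv_i(w) = {j : i < j ≤ n, w_i > w_j}` equals `{k : w_k < min{w_1,…,w_i}}`. -/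
theorem stmt3 (n : ℕ) (w : Equiv.Perm (Fin n)) (h : Avoids132 w) (i : Fin n) :
    (Finset.univ.filter fun j => i < j ∧ w j < w i) =
      (Finset.univ.filter fun k =>
        (w k : ℕ) < Finset.inf' (Finset.univ.filter fun j => j ≤ i) ⟨i, by simp⟩
          (fun j => (w j : ℕ))) := by
  ext k
  simp only [Finset.mem_filter, Finset.mem_univ, true_and]
  constructor
  · rintro ⟨hik, hwk⟩
    refine (Finset.lt_inf'_iff _).mpr ?_
    intro t ht
    simp only [Finset.mem_filter, Finset.mem_univ, true_and] at ht
    by_contra hle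
    push_neg at hle
    rcases ht.lt_or_eq with hti | hti
    · -- t < i < k with w t < w k < w i : forbidden pattern
      have hne : w t ≠ w k := fun e => absurd (w.injective e) (by
        intro e'; exact absurd (e' ▸ hti) (not_lt.mpr (le_of_lt hik)))
      have htk : w t < w k := lt_of_le_of_ne (Fin.le_def.mpr hle) hne
      exact h ⟨t, i, k, hti, hik, htk, hwk⟩
    · subst hti
      exact absurd (Fin.le_def.mpr hle) (not_le.mpr hwk)
  · intro hk
    replace hk := (Finset.lt_inf'_iff _).mp hk
    have hi := hk i (by simp)
    refine ⟨?_, Fin.lt_def.mpr hi⟩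
    by_contra hle
    push_neg at hle
    exact absurd (hk k (by simp [hle])) (lt_irrefl _)
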